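/- arXiv:1910.03537 — 2 statements merged into one kernel-verified Lean document; each statement's English description precedes it below -/
import Mathlib

section
/- Let n, k ≥ 1 and let x_{l,1}, …, x_{l,n} be elements of the real Hilbert space ℓ²(ℕ; ℝ) for each l = 1, …, k. Then the n × n real matrix whose (i,j) entry is ∏_{l=1}^k exp(−‖x_{l,i} − x_{l,j}‖²) − 1/n is positive semidefinite. -/
open Matrix

namespace GKPBaux

variable {n : ℕ}

lemma quad_eq (A : Matrix (Fin n) (Fin n) ℝ) (y : Fin n → ℝ) :
    star y ⬝ᵥ (A *ᵥ y) = ∑ i, ∑ j, y i * y j * A i j := by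
  simp only [dotProduct, Matrix.mulVec, Pi.star_apply, star_trivial, Finset.mul_sum]
  exact Finset.sum_congr rfl fun i _ => Finset.sum_congr rfl fun j _ => by ring

lemma quad_nonneg {A : Matrix (Fin n) (Fin n) ℝ} (hA : A.PosSemidef)
    (y : Fin n → ℝ) : 0 ≤ ∑ i, ∑ j, y i * y j * A i j := by
  have h := hA.dotProduct_mulVec_nonneg y
  rwa [quad_eq] at h

lemma psd_of_quad {A : Matrix (Fin n) (Fin n) ℝ} (hsymm : ∀ i j, A i j = A j i)
    (h : ∀ y : Fin n → ℝ, 0 ≤ ∑ i, ∑ j, y i * y j * A i j) : A.PosSemidef := by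
  refine Matrix.PosSemidef.of_dotProduct_mulVec_nonneg ?_ ?_
  · ext i j
    simp only [Matrix.conjTranspose_apply, star_trivial]
    exact hsymm j i
  · intro y
    rw [quad_eq]
    exact h y

lemma entry_symm {A : Matrix (Fin n) (Fin n) ℝ} (hA : A.PosSemidef) (i j : Fin n) :
    A i j = A j i := by
  have := congrFun (congrFun hA.1 i) j
  simpa [Matrix.conjTranspose_apply] using this.symm

lemma schur {A B : Matrix (Fin n) (Fin n) ℝ} (hA : A.PosSemidef) (hB : B.PosSemidef) :
    (Matrix.of fun i j => A i j * B i j).PosSemidef := by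
  obtain ⟨C, hC⟩ : ∃ C : Matrix (Fin n) (Fin n) ℝ, B = star C * C := by
    open scoped MatrixOrder in exact CStarAlgebra.nonneg_iff_eq_star_mul_self.mp hB.nonneg
  have hBij : ∀ i j, B i j = ∑ a, C a i * C a j := by
    intro i j
    rw [hC]
    simp [Matrix.mul_apply, Matrix.conjTranspose_apply]
  apply psd_of_quad
  · intro i j
    simp only [Matrix.of_apply]
    rw [entry_symm hA, entry_symm hB]
  · intro y
    have key : ∑ i, ∑ j, y i * y j * (Matrix.of fun i j => A i j * B i j) i j
        = ∑ a, ∑ i, ∑ j, (y i * C a i) * (y j * C a j) * A i j := by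
      simp only [Matrix.of_apply]
      calc ∑ i, ∑ j, y i * y j * (A i j * B i j)
          = ∑ i, ∑ j, ∑ a, (y i * C a i) * (y j * C a j) * A i j := by
            refine Finset.sum_congr rfl fun i _ => Finset.sum_congr rfl fun j _ => ?_
            rw [hBij i j, Finset.mul_sum, Finset.mul_sum]
            exact Finset.sum_congr rfl fun a _ => by ring
        _ = ∑ i, ∑ a, ∑ j, (y i * C a i) * (y j * C a j) * A i j :=
            Finset.sum_congr rfl fun i _ => Finset.sum_comm
        _ = ∑ a, ∑ i, ∑ j, (y i * C a i) * (y j * C a j) * A i j :=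
            Finset.sum_comm
    rw [key]
    refine Finset.sum_nonneg fun a _ => ?_
    simpa using quad_nonneg hA (fun i => y i * C a i)

lemma pow_psd {P : Matrix (Fin n) (Fin n) ℝ} (hP : P.PosSemidef) (m : ℕ) :
    (Matrix.of fun i j => P i j ^ m).PosSemidef := by
  induction m with
  | zero =>
      refine psd_of_quad (fun i j => by simp) fun y => ?_
      have : ∑ i, ∑ j, y i * y j * (Matrix.of fun i j : Fin n => P i j ^ 0) i j
          = (∑ i, y i) * (∑ j, y j) := by
        rw [Finset.sum_mul_sum]
        exact Finset.sum_congr rfl fun i _ => Finset.sum_congr rfl fun j _ => by simp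
      rw [this, ← sq]
      positivity
  | succ m ih =>
      have h := schur ih hP
      have : (Matrix.of fun i j => (Matrix.of fun i j => P i j ^ m) i j * P i j)
          = (Matrix.of fun i j => P i j ^ (m + 1)) := by
        ext i j
        simp [pow_succ]
      rwa [this] at h

lemma exp_psd {P : Matrix (Fin n) (Fin n) ℝ} (hP : P.PosSemidef) :
    (Matrix.of fun i j => Real.exp (P i j)).PosSemidef := by
  refine psd_of_quad (fun i j => by simp [entry_symm hP i j]) fun y => ?_
  have hexp : ∀ i j, Real.exp (P i j) = ∑' m : ℕ, P i j ^ m / (Nat.factorial m : ℝ) := by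
    intro i j
    rw [Real.exp_eq_exp_ℝ, NormedSpace.exp_eq_tsum_div]
  have hsummable : ∀ i j : Fin n, Summable (fun m : ℕ => y i * y j * (P i j ^ m / (Nat.factorial m : ℝ))) :=
    fun i j => (Real.summable_pow_div_factorial (P i j)).mul_left _
  calc ∑ i, ∑ j, y i * y j * (Matrix.of fun i j => Real.exp (P i j)) i j
      = ∑ i, ∑ j, ∑' m : ℕ, y i * y j * (P i j ^ m / (Nat.factorial m : ℝ)) := by
        refine Finset.sum_congr rfl fun i _ => Finset.sum_congr rfl fun j _ => ?_
        simp only [Matrix.of_apply]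
        rw [hexp i j, ← tsum_mul_left]
    _ = ∑ i, ∑' m : ℕ, ∑ j, y i * y j * (P i j ^ m / (Nat.factorial m : ℝ)) :=
        Finset.sum_congr rfl fun i _ => (Summable.tsum_finsetSum (fun j _ => hsummable i j)).symm
    _ = ∑' m : ℕ, ∑ i, ∑ j, y i * y j * (P i j ^ m / (Nat.factorial m : ℝ)) :=
        (Summable.tsum_finsetSum (fun i _ => summable_sum (fun j _ => hsummable i j))).symm
    _ ≥ 0 := by
        refine tsum_nonneg fun m => ?_
        have h := quad_nonneg (pow_psd hP m) y
        simp only [Matrix.of_apply] at h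
        have : ∑ i, ∑ j, y i * y j * (P i j ^ m / (Nat.factorial m : ℝ))
            = (∑ i, ∑ j, y i * y j * P i j ^ m) / (Nat.factorial m : ℝ) := by
          rw [Finset.sum_div]
          exact Finset.sum_congr rfl fun i _ => by
            rw [Finset.sum_div]
            exact Finset.sum_congr rfl fun j _ => by ring
        rw [this]
        positivity

end GKPBaux

open Matrix RealInnerProductSpace

theorem gaussian_kernel_product_lower_bound
    (n k : ℕ) (hn : 1 ≤ n) (hk : 1 ≤ k)
    (x : Fin k → Fin n → lp (fun _ : ℕ => ℝ) 2) :
    (Matrix.of fun i j : Fin n =>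
      (∏ l, Real.exp (-‖x l i - x l j‖ ^ 2)) - 1 / n).PosSemidef := by
  classical
  have hnR : (0:ℝ) < n := by
    have : (1:ℝ) ≤ n := by exact_mod_cast hn
    linarith
  -- the squared-distance sums and the "half-bandwidth" Gaussian kernel matrix G
  set D : Fin n → Fin n → ℝ := fun i j => ∑ l, ‖x l i - x l j‖ ^ 2 with hDdef
  set G : Matrix (Fin n) (Fin n) ℝ := Matrix.of (fun i j => Real.exp (-(D i j) / 2))
    with hGdef
  have hGapp : ∀ i j, G i j = Real.exp (-(D i j) / 2) := fun i j => rfl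
  -- the product of Gaussians is G i j ^ 2
  have hE : ∀ i j, (∏ l, Real.exp (-‖x l i - x l j‖ ^ 2)) = G i j ^ 2 := by
    intro i j
    rw [← Real.exp_sum, hGapp, sq, ← Real.exp_add]
    congr 1
    have : ∑ l, -‖x l i - x l j‖ ^ 2 = -(D i j) := by
      rw [hDdef, ← Finset.sum_neg_distrib]
    rw [this]
    ring
  -- symmetry of D
  have hDsymm : ∀ i j, D i j = D j i := by
    intro i j
    refine Finset.sum_congr rfl fun l _ => ?_
    rw [norm_sub_rev]
  -- diagonal of G is 1
  have hGdiag : ∀ i, G i i = 1 := by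
    intro i
    rw [hGapp]
    have : D i i = 0 := by
      rw [hDdef]
      refine Finset.sum_eq_zero fun l _ => ?_
      simp
    rw [this]
    norm_num
  -- the Gram matrix P
  set P : Matrix (Fin n) (Fin n) ℝ :=
    Matrix.of (fun i j => ∑ l, ⟪x l i, x l j⟫) with hPdef
  have hPapp : ∀ i j, P i j = ∑ l, ⟪x l i, x l j⟫ := fun i j => rfl
  have hPsymm : ∀ i j, P i j = P j i := by
    intro i j
    rw [hPapp, hPapp]
    exact Finset.sum_congr rfl fun l _ => real_inner_comm _ _
  have hPpsd : P.PosSemidef := by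
    refine GKPBaux.psd_of_quad hPsymm fun y => ?_
    have key : ∑ i, ∑ j, y i * y j * P i j
        = ∑ l, ⟪(∑ i, y i • x l i), (∑ j, y j • x l j)⟫ := by
      calc ∑ i, ∑ j, y i * y j * P i j
          = ∑ i, ∑ j, ∑ l, y i * y j * ⟪x l i, x l j⟫ := by
            refine Finset.sum_congr rfl fun i _ => Finset.sum_congr rfl fun j _ => ?_
            rw [hPapp, Finset.mul_sum]
        _ = ∑ i, ∑ l, ∑ j, y i * y j * ⟪x l i, x l j⟫ :=
            Finset.sum_congr rfl fun i _ => Finset.sum_comm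
        _ = ∑ l, ∑ i, ∑ j, y i * y j * ⟪x l i, x l j⟫ := Finset.sum_comm
        _ = ∑ l, ⟪(∑ i, y i • x l i), (∑ j, y j • x l j)⟫ := by
            refine Finset.sum_congr rfl fun l _ => ?_
            rw [sum_inner]
            refine Finset.sum_congr rfl fun i _ => ?_
            rw [inner_sum]
            refine Finset.sum_congr rfl fun j _ => ?_
            rw [real_inner_smul_left, real_inner_smul_right]
            ring
    rw [key]
    exact Finset.sum_nonneg fun l _ => real_inner_self_nonneg
  -- G in terms of P
  set d : Fin n → ℝ := fun i => Real.exp (-(∑ l, ‖x l i‖ ^ 2) / 2) with hddef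
  have hGP : ∀ i j, G i j = (d i * d j) * Real.exp (P i j) := by
    intro i j
    have e : D i j = (∑ l, ‖x l i‖ ^ 2) - 2 * P i j + (∑ l, ‖x l j‖ ^ 2) := by
      rw [hDdef, hPapp]
      calc ∑ l, ‖x l i - x l j‖ ^ 2
          = ∑ l, (‖x l i‖ ^ 2 - 2 * ⟪x l i, x l j⟫ + ‖x l j‖ ^ 2) :=
            Finset.sum_congr rfl fun l _ => norm_sub_sq_real _ _
        _ = (∑ l, ‖x l i‖ ^ 2) - 2 * (∑ l, ⟪x l i, x l j⟫) + (∑ l, ‖x l j‖ ^ 2) := by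
            rw [Finset.sum_add_distrib, Finset.sum_sub_distrib, Finset.mul_sum]
    rw [hGapp, hddef]
    have : -(D i j) / 2 = -(∑ l, ‖x l i‖ ^ 2) / 2 + (-(∑ l, ‖x l j‖ ^ 2) / 2 + P i j) := by
      rw [e]; ring
    rw [this, Real.exp_add, Real.exp_add]
    ring
  -- G is positive semidefinite
  have hGpsd : G.PosSemidef := by
    refine GKPBaux.psd_of_quad (fun i j => by rw [hGapp, hGapp, hDsymm]) fun y => ?_
    have h := GKPBaux.quad_nonneg (GKPBaux.exp_psd hPpsd) (fun i => y i * d i)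
    simp only [Matrix.of_apply] at h
    have key : ∑ i, ∑ j, y i * y j * G i j
        = ∑ i, ∑ j, (y i * d i) * (y j * d j) * Real.exp (P i j) := by
      refine Finset.sum_congr rfl fun i _ => Finset.sum_congr rfl fun j _ => ?_
      rw [hGP i j]
      ring
    rw [key]
    exact h
  -- a square root of G
  obtain ⟨C, hC⟩ : ∃ C : Matrix (Fin n) (Fin n) ℝ, G = star C * C := by
    open scoped MatrixOrder in exact CStarAlgebra.nonneg_iff_eq_star_mul_self.mp hGpsd.nonneg
  have hGc : ∀ i j, G i j = ∑ a, C a i * C a j := by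
    intro i j
    rw [hC]
    simp [Matrix.mul_apply, Matrix.conjTranspose_apply]
  -- final quadratic form estimate
  refine GKPBaux.psd_of_quad ?_ ?_
  · intro i j
    simp only [Matrix.of_apply]
    congr 1
    refine Finset.prod_congr rfl fun l _ => ?_
    rw [norm_sub_rev]
  · intro y
    set M : Fin n → Fin n → ℝ := fun a b => ∑ i, y i * (C a i * C b i) with hMdef
    have htr : ∑ a, M a a = ∑ i, y i := by
      calc ∑ a, M a a = ∑ a, ∑ i, y i * (C a i * C a i) := rfl
        _ = ∑ i, ∑ a, y i * (C a i * C a i) := Finset.sum_comm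
        _ = ∑ i, y i * ∑ a, C a i * C a i := by
            refine Finset.sum_congr rfl fun i _ => ?_
            rw [Finset.mul_sum]
        _ = ∑ i, y i := by
            refine Finset.sum_congr rfl fun i _ => ?_
            rw [← hGc i i, hGdiag i, mul_one]
    have hfro : ∑ i, ∑ j, y i * y j * G i j ^ 2 = ∑ a, ∑ b, M a b ^ 2 := by
      calc ∑ i, ∑ j, y i * y j * G i j ^ 2
          = ∑ i, ∑ j, ∑ a, ∑ b, (y i * (C a i * C b i)) * (y j * (C a j * C b j)) := by
            refine Finset.sum_congr rfl fun i _ => Finset.sum_congr rfl fun j _ => ?_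
            rw [hGc i j, sq, Finset.sum_mul_sum, Finset.mul_sum]
            refine Finset.sum_congr rfl fun a _ => ?_
            rw [Finset.mul_sum]
            refine Finset.sum_congr rfl fun b _ => ?_
            ring
        _ = ∑ i, ∑ a, ∑ j, ∑ b, (y i * (C a i * C b i)) * (y j * (C a j * C b j)) :=
            Finset.sum_congr rfl fun i _ => Finset.sum_comm
        _ = ∑ a, ∑ i, ∑ j, ∑ b, (y i * (C a i * C b i)) * (y j * (C a j * C b j)) :=
            Finset.sum_comm
        _ = ∑ a, ∑ i, ∑ b, ∑ j, (y i * (C a i * C b i)) * (y j * (C a j * C b j)) :=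
            Finset.sum_congr rfl fun a _ => Finset.sum_congr rfl fun i _ => Finset.sum_comm
        _ = ∑ a, ∑ b, ∑ i, ∑ j, (y i * (C a i * C b i)) * (y j * (C a j * C b j)) :=
            Finset.sum_congr rfl fun a _ => Finset.sum_comm
        _ = ∑ a, ∑ b, M a b ^ 2 := by
            refine Finset.sum_congr rfl fun a _ => Finset.sum_congr rfl fun b _ => ?_
            rw [hMdef, sq, Finset.sum_mul_sum]
    have hdiagsq : ∑ a, M a a ^ 2 ≤ ∑ a, ∑ b, M a b ^ 2 :=
      Finset.sum_le_sum fun a _ =>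
        Finset.single_le_sum (f := fun b => M a b ^ 2) (fun b _ => sq_nonneg _)
          (Finset.mem_univ a)
    have hCS : (∑ i, y i) ^ 2 ≤ (n : ℝ) * ∑ a, ∑ b, M a b ^ 2 := by
      have h1 : (∑ a, M a a) ^ 2 ≤ (n : ℝ) * ∑ a, M a a ^ 2 := by
        have := sq_sum_le_card_mul_sum_sq (s := (Finset.univ : Finset (Fin n)))
          (f := fun a => M a a)
        simpa using this
      calc (∑ i, y i) ^ 2 = (∑ a, M a a) ^ 2 := by rw [htr]
        _ ≤ (n : ℝ) * ∑ a, M a a ^ 2 := h1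
        _ ≤ (n : ℝ) * ∑ a, ∑ b, M a b ^ 2 := by
            exact mul_le_mul_of_nonneg_left hdiagsq (le_of_lt hnR)
    have split : ∑ i, ∑ j, y i * y j *
          ((Matrix.of fun i j : Fin n =>
            (∏ l, Real.exp (-‖x l i - x l j‖ ^ 2)) - 1 / n) i j)
        = (∑ i, ∑ j, y i * y j * G i j ^ 2) - (∑ i, y i) ^ 2 / n := by
      have e1 : ∀ i j : Fin n, y i * y j *
            ((∏ l, Real.exp (-‖x l i - x l j‖ ^ 2)) - 1 / n)
          = y i * y j * G i j ^ 2 - y i * y j * (1 / n) := by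
        intro i j
        rw [hE i j]
        ring
      calc ∑ i, ∑ j, y i * y j *
            ((Matrix.of fun i j : Fin n =>
              (∏ l, Real.exp (-‖x l i - x l j‖ ^ 2)) - 1 / n) i j)
          = ∑ i, ∑ j, (y i * y j * G i j ^ 2 - y i * y j * (1 / n)) := by
            refine Finset.sum_congr rfl fun i _ => Finset.sum_congr rfl fun j _ => ?_
            exact e1 i j
        _ = (∑ i, ∑ j, y i * y j * G i j ^ 2) - ∑ i, ∑ j, y i * y j * (1 / n) := by
            rw [← Finset.sum_sub_distrib]
            refine Finset.sum_congr rfl fun i _ => ?_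
            rw [← Finset.sum_sub_distrib]
        _ = (∑ i, ∑ j, y i * y j * G i j ^ 2) - (∑ i, y i) ^ 2 / n := by
            congr 1
            rw [sq, Finset.sum_mul_sum]
            rw [Finset.sum_div]
            refine Finset.sum_congr rfl fun i _ => ?_
            rw [Finset.sum_div]
            refine Finset.sum_congr rfl fun j _ => ?_
            ring
    rw [split, sub_nonneg, div_le_iff₀ hnR, hfro]
    calc (∑ i, y i) ^ 2 ≤ (n : ℝ) * ∑ a, ∑ b, M a b ^ 2 := hCS
      _ = (∑ a, ∑ b, M a b ^ 2) * n := mul_comm _ _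
end

section
/- Let n, k ≥ 1 and let x_{l,1}, …, x_{l,n} be real numbers for each l = 1, …, k. Then the n × n real matrix whose (i,j) entry is ∏_{l=1}^k cos²(x_{l,i} − x_{l,j}) − 1/n is positive semidefinite. -/
open Matrix Finset
open scoped MatrixOrder

lemma gram_psd (n k : ℕ) (x : Fin k → Fin n → ℝ) :
    (Matrix.of fun i j : Fin n => ∏ l, Real.cos (x l i - x l j)).PosSemidef := by
  rw [posSemidef_iff_dotProduct_mulVec]
  constructor
  · ext i j
    simp only [conjTranspose_apply, of_apply, star_trivial]
    exact Finset.prod_congr rfl fun l _ => by rw [← Real.cos_neg]; ring_nf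
  · intro v
    set c : Finset (Fin k) → Fin n → ℝ := fun t i =>
      (∏ l ∈ t, Real.cos (x l i)) * ∏ l ∈ Finset.univ \ t, Real.sin (x l i) with hc
    have expand : ∀ i j : Fin n, (∏ l, Real.cos (x l i - x l j))
        = ∑ t ∈ (Finset.univ : Finset (Fin k)).powerset, c t i * c t j := by
      intro i j
      have : ∀ l : Fin k, Real.cos (x l i - x l j)
          = Real.cos (x l i) * Real.cos (x l j) + Real.sin (x l i) * Real.sin (x l j) :=
        fun l => Real.cos_sub _ _
      rw [Finset.prod_congr rfl fun l _ => this l,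
        Finset.prod_add]
      refine Finset.sum_congr rfl fun t _ => ?_
      rw [hc]
      simp only [Finset.prod_mul_distrib]
      ring
    have key : star v ⬝ᵥ ((Matrix.of fun i j : Fin n => ∏ l, Real.cos (x l i - x l j)) *ᵥ v)
        = ∑ t ∈ (Finset.univ : Finset (Fin k)).powerset, (∑ i, v i * c t i) ^ 2 := by
      simp only [dotProduct, mulVec, of_apply, star_trivial]
      calc ∑ i, v i * ∑ j, (∏ l, Real.cos (x l i - x l j)) * v j
          = ∑ i, ∑ j, ∑ t ∈ (Finset.univ : Finset (Fin k)).powerset,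
              (v i * c t i) * (v j * c t j) := by
            refine Finset.sum_congr rfl fun i _ => ?_
            rw [Finset.mul_sum]
            refine Finset.sum_congr rfl fun j _ => ?_
            rw [expand i j, Finset.sum_mul, Finset.mul_sum]
            exact Finset.sum_congr rfl fun t _ => by ring
        _ = ∑ t ∈ (Finset.univ : Finset (Fin k)).powerset,
              (∑ i, v i * c t i) ^ 2 := by
            rw [show (∑ i, ∑ j, ∑ t ∈ (Finset.univ : Finset (Fin k)).powerset,
                (v i * c t i) * (v j * c t j))
              = ∑ i, ∑ t ∈ (Finset.univ : Finset (Fin k)).powerset,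
                ∑ j, (v i * c t i) * (v j * c t j) from
              Finset.sum_congr rfl fun i _ => Finset.sum_comm]
            rw [Finset.sum_comm]
            refine Finset.sum_congr rfl fun t _ => ?_
            rw [sq, Finset.sum_mul_sum]
    rw [key]
    exact Finset.sum_nonneg fun t _ => sq_nonneg _

lemma trace_sq_le_card_mul_trace_sq (n : ℕ) (N : Matrix (Fin n) (Fin n) ℝ)
    (h : ∀ i j, N i j = N j i) : N.trace ^ 2 ≤ n * (N * N).trace := by
  have h1 : (N * N).trace = ∑ i, ∑ j, N i j ^ 2 := by
    simp only [Matrix.trace, Matrix.diag, Matrix.mul_apply]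
    exact Finset.sum_congr rfl fun i _ => Finset.sum_congr rfl fun j _ => by
      rw [h j i]; ring
  have h2 : N.trace = ∑ i, N i i := rfl
  rw [h1, h2]
  calc (∑ i, N i i) ^ 2 ≤ (Finset.univ : Finset (Fin n)).card * ∑ i, N i i ^ 2 :=
        sq_sum_le_card_mul_sum_sq
    _ ≤ n * ∑ i, ∑ j, N i j ^ 2 := by
        rw [Finset.card_univ, Fintype.card_fin]
        refine mul_le_mul_of_nonneg_left (Finset.sum_le_sum fun i _ => ?_) (by positivity)
        exact Finset.single_le_sum (fun j _ => sq_nonneg (N i j)) (Finset.mem_univ i)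

theorem novak_conjecture
    (n k : ℕ) (hn : 1 ≤ n) (hk : 1 ≤ k)
    (x : Fin k → Fin n → ℝ) :
    (Matrix.of fun i j : Fin n =>
      (∏ l, Real.cos (x l i - x l j) ^ 2) - 1 / n).PosSemidef := by
  set G : Matrix (Fin n) (Fin n) ℝ :=
    Matrix.of fun i j : Fin n => ∏ l, Real.cos (x l i - x l j) with hGdef
  have hG : G.PosSemidef := gram_psd n k x
  have hGsymm : ∀ i j, G i j = G j i := fun i j => by
    have := hG.1.apply i j; simpa using this.symm
  have hGdiag : ∀ i, G i i = 1 := fun i => by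
    simp [hGdef]
  have hnpos : (0 : ℝ) < n := by exact_mod_cast hn
  rw [posSemidef_iff_dotProduct_mulVec]
  constructor
  · ext i j
    simp only [conjTranspose_apply, of_apply, star_trivial]
    congr 1
    exact Finset.prod_congr rfl fun l _ => by rw [← Real.cos_neg]; ring_nf
  · intro v
    set S := CFC.sqrt G with hS
    have hSsymm : ∀ i j, S i j = S j i := fun i j => by
      have := (CFC.sqrt_nonneg G).posSemidef.1.apply i j; simpa using this.symm
    set D : Matrix (Fin n) (Fin n) ℝ := Matrix.diagonal v with hD
    set N := S * D * S with hN
    have hNapp : ∀ i j, N i j = ∑ a, S i a * v a * S a j := by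
      intro i j
      rw [hN, Matrix.mul_apply]
      exact Finset.sum_congr rfl fun a _ => by rw [hD, Matrix.mul_diagonal]
    have hNsymm : ∀ i j, N i j = N j i := by
      intro i j
      rw [hNapp, hNapp]
      exact Finset.sum_congr rfl fun a _ => by rw [hSsymm i a, hSsymm a j]; ring
    have hSS : S * S = G := CFC.sqrt_mul_sqrt_self G hG.nonneg
    have htr : N.trace = ∑ i, v i := by
      rw [hN, Matrix.trace_mul_cycle, hSS]
      simp only [Matrix.trace, Matrix.diag, hD, Matrix.mul_diagonal]
      exact Finset.sum_congr rfl fun i _ => by rw [hGdiag i, one_mul]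
    have htr2 : (N * N).trace = ∑ i, ∑ j, v i * v j * G i j ^ 2 := by
      have e1 : N * N = S * (D * (G * (D * S))) := by
        rw [hN]
        simp only [Matrix.mul_assoc]
        rw [← Matrix.mul_assoc S S (D * S), hSS]
      have e2 : (N * N).trace = (D * (G * (D * G))).trace := by
        rw [e1, Matrix.trace_mul_comm]
        simp only [Matrix.mul_assoc]
        rw [hSS]
      rw [e2]
      simp only [Matrix.trace, Matrix.diag, hD, Matrix.mul_apply,
        Matrix.diagonal_apply, ite_mul, zero_mul, Finset.sum_ite_eq', Finset.sum_ite_eq,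
        Finset.mem_univ, if_true]
      refine Finset.sum_congr rfl fun i _ => ?_
      rw [Finset.mul_sum]
      refine Finset.sum_congr rfl fun j _ => ?_
      rw [hGsymm j i]
      ring
    have hCS : (∑ i, v i) ^ 2 ≤ n * ∑ i, ∑ j, v i * v j * G i j ^ 2 := by
      rw [← htr, ← htr2]
      exact trace_sq_le_card_mul_trace_sq n N hNsymm
    have hq : star v ⬝ᵥ ((Matrix.of fun i j : Fin n =>
          (∏ l, Real.cos (x l i - x l j) ^ 2) - 1 / n) *ᵥ v)
        = (∑ i, ∑ j, v i * v j * G i j ^ 2) - (∑ i, v i) ^ 2 / n := by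
      simp only [dotProduct, mulVec, of_apply, star_trivial]
      have step : ∀ i, v i * ∑ j, ((∏ l, Real.cos (x l i - x l j) ^ 2) - 1 / n) * v j
          = (∑ j, v i * v j * G i j ^ 2) - ∑ j, v i * v j / n := by
        intro i
        rw [Finset.mul_sum, ← Finset.sum_sub_distrib]
        refine Finset.sum_congr rfl fun j _ => ?_
        rw [show (∏ l, Real.cos (x l i - x l j) ^ 2) = G i j ^ 2 by
          rw [hGdef]; exact Finset.prod_pow _ _ _]
        ring
      rw [Finset.sum_congr rfl fun i _ => step i, Finset.sum_sub_distrib]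
      congr 1
      rw [sq, Finset.sum_mul_sum]
      simp only [Finset.sum_div]
    rw [hq, sub_nonneg, div_le_iff₀ hnpos]
    nlinarith [hCS]
end
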